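/- Suppose that for every pair of vertices v, u ∈ E⁰ and every k ≥ 1 there is a path w ∈ E* with s(w) = v, r(w) = u, and n_k dividing |w|. Then the only nonempty closed invariant subset of Y is Y itself (i.e., E(∞) is minimal). Key step: under the hypothesis, elements of the form τ(w[k]) with |w[k]| a multiple of n_k and r(w[k]) = v converge to τ(v) = (v, v, …) as k → ∞. -/

import Mathlib

/-- A directed graph: vertices, edges, source and range maps. -/
structure DirGraph where
  V : Type
  E : Type
  s : E → V
  r : E → V

namespace DirGraph

/-- `G.IsPathFrom x l` : the list of edges `l` (in walking order) forms a
path starting at the vertex `x`. -/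
def IsPathFrom (G : DirGraph) : G.V → List G.E → Prop
  | _, [] => True
  | x, e :: es => G.s e = x ∧ G.IsPathFrom (G.r e) es

/-- The vertex reached after walking the edges `l` starting at `x`. -/
def endAt (G : DirGraph) : G.V → List G.E → G.V
  | x, [] => x
  | _, e :: es => G.endAt (G.r e) es

/-- A finite path in `G`: a source vertex together with a composable list of
edges (in walking order).  Vertices are the paths with no edges. -/
structure Path (G : DirGraph) where
  src : G.V
  edges : List G.E
  valid : G.IsPathFrom src edges

namespace Path

variable {G : DirGraph}

/-- The range (final vertex) of a path. -/
def rng (p : G.Path) : G.V := G.endAt p.src p.edges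

/-- The length of a path. -/
def length (p : G.Path) : ℕ := p.edges.length

/-- The trivial path at a vertex. -/
def nil (x : G.V) : G.Path := ⟨x, [], trivial⟩

end Path

variable {G : DirGraph}

theorem isPathFrom_append :
    ∀ (l₁ l₂ : List G.E) (x : G.V), G.IsPathFrom x l₁ →
      G.IsPathFrom (G.endAt x l₁) l₂ → G.IsPathFrom x (l₁ ++ l₂)
  | [], _, _, _, h₂ => h₂
  | e :: es, l₂, _, h₁, h₂ => ⟨h₁.1, isPathFrom_append es l₂ (G.r e) h₁.2 h₂⟩

theorem endAt_append :
    ∀ (l₁ l₂ : List G.E) (x : G.V), G.endAt x (l₁ ++ l₂) = G.endAt (G.endAt x l₁) l₂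
  | [], _, _ => rfl
  | e :: es, l₂, x => endAt_append es l₂ (G.r e)

theorem isPathFrom_take_drop :
    ∀ (l : List G.E) (k : ℕ) (x : G.V), G.IsPathFrom x l →
      G.IsPathFrom (G.endAt x (l.take k)) (l.drop k)
  | [], k, _, h => by cases k <;> exact h
  | _ :: _, 0, _, h => h
  | e :: es, k + 1, x, h => isPathFrom_take_drop es k (G.r e) h.2

/-- Extend a path by one more edge at its end (`p.cons e` is the path `e·p`). -/
def Path.cons (p : G.Path) (e : G.E) (h : G.s e = p.rng) : G.Path :=
  ⟨p.src, p.edges ++ [e], isPathFrom_append p.edges [e] p.src p.valid ⟨h, trivial⟩⟩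

@[simp] theorem Path.cons_length (p : G.Path) (e : G.E) (h : G.s e = p.rng) :
    (p.cons e h).length = p.length + 1 := by
  simp [Path.cons, Path.length]

/-- The remainder `w(n)` of a path modulo `n`: the final segment of length
`|w| % n` (the part of `w` walked last). -/
def Path.rem (p : G.Path) (n : ℕ) : G.Path :=
  ⟨G.endAt p.src (p.edges.take (p.length - p.length % n)),
   p.edges.drop (p.length - p.length % n),
   isPathFrom_take_drop p.edges _ p.src p.valid⟩

theorem Path.rem_length (p : G.Path) (n : ℕ) : (p.rem n).length = p.length % n := by
  show (p.edges.drop (p.length - p.length % n)).length = _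
  rw [List.length_drop]
  exact Nat.sub_sub_self (Nat.mod_le _ _)

theorem Path.rem_rng (p : G.Path) (n : ℕ) : (p.rem n).rng = p.rng := by
  show G.endAt (G.endAt p.src (p.edges.take (p.length - p.length % n)))
      (p.edges.drop (p.length - p.length % n)) = _
  rw [← endAt_append, List.take_append_drop]
  rfl

/-- The graph `E(n)`: vertices are paths of length `< n` in `G`, edges are
pairs `(e, w)` with `s(e) = r(w)`; `s(e,w) = w` and `r(e,w) = ew` if
`|w| < n - 1`, and `r(e,w) = r(e)` if `|w| = n - 1`. -/
def graphN (G : DirGraph) (n : ℕ) : DirGraph where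
  V := {w : G.Path // w.length < n}
  E := {p : G.E × G.Path // p.2.length < n ∧ G.s p.1 = p.2.rng}
  s := fun f => ⟨f.val.2, f.prop.1⟩
  r := fun f =>
    if h : f.val.2.length + 1 < n then
      ⟨f.val.2.cons f.val.1 f.prop.2, by simpa using h⟩
    else
      ⟨Path.nil (G.r f.val.1), by
        have := f.prop.1
        simp only [Path.nil, Path.length, List.length_nil]
        omega⟩

/-- A factor map between (finite) directed graphs. -/
structure FactorMap (F E : DirGraph) where
  m0 : F.V → E.V
  m1 : F.E → E.E
  src_eq : ∀ f, E.s (m1 f) = m0 (F.s f)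
  rng_eq : ∀ f, E.r (m1 f) = m0 (F.r f)
  lift : ∀ (e' : E.E) (v : F.V), E.s e' = m0 v →
    ∃! f : F.E, m1 f = e' ∧ F.s f = v

/-- The simple loop (cycle) digraph with `j` vertices. -/
def cyc (j : ℕ) : DirGraph where
  V := ZMod j
  E := ZMod j
  s := id
  r := fun i => i + 1

end DirGraph

namespace DirGraph

/-- `Xc G n i` is the (discrete) space `X_{i+1}` of paths in `G` of length
`< n (i+1)` whose length is divisible by `n i`. -/
abbrev Xc (G : DirGraph) (n : ℕ → ℕ) (i : ℕ) : Type :=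
  {w : G.Path // w.length < n (i + 1) ∧ n i ∣ w.length}

instance (G : DirGraph) (n : ℕ → ℕ) (i : ℕ) : TopologicalSpace (Xc G n i) := ⊥

instance (G : DirGraph) (n : ℕ → ℕ) (i : ℕ) : DiscreteTopology (Xc G n i) := ⟨rfl⟩

/-- `Yt G n` is the `{n_k}`-compactification `Y` of `E*`: the composable
sequences in `Π_i X_i`, with the product topology (each `X_i` discrete). -/
abbrev Yt (G : DirGraph) (n : ℕ → ℕ) : Type :=
  {y : ∀ i, Xc G n i // ∀ i, (y i).val.src = (y (i + 1)).val.rng}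

/-- The `i`-th coordinate path of an element of `Y`. -/
def yc {G : DirGraph} {n : ℕ → ℕ} (y : Yt G n) (i : ℕ) : G.Path := (y.val i).val

/-- The domain `D_e = { y ∈ Y : r(y₁) = s(e) }` of the odometer map `σ_e`. -/
def De (G : DirGraph) (n : ℕ → ℕ) (e : G.E) : Set (Yt G n) :=
  {y | (yc y 0).rng = G.s e}

/-- `Represents G n w y` says that `y ∈ Y` is the image `τ(w)` of the path
`w` under the canonical embedding: from some index `k` on the coordinates are
the trivial path at `s(w)`, and `w` is the concatenation `w₁ w₂ ⋯ w_k` of the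
first `k` coordinates (the `k`-th walked first). -/
def Represents (G : DirGraph) (n : ℕ → ℕ) (w : G.Path) (y : Yt G n) : Prop :=
  ∃ k : ℕ,
    (∀ i, k ≤ i → (yc y i).edges = [] ∧ (yc y i).src = w.src) ∧
    w.edges = (((List.range k).map fun i => (yc y i).edges).reverse).flatten

/-- `Carry G n e y z i0` : `z = σ_e(y)` where `i0 = i(y) < ∞` is the least
index with `|y_{i0}| < n_{i0+1} - n_{i0}`: the coordinates below `i0` of `z`
are the trivial path at `r(e)`, the `i0`-th is `e y₀ y₁ ⋯ y_{i0}`, and the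
coordinates above `i0` are unchanged. -/
def Carry (G : DirGraph) (n : ℕ → ℕ) (e : G.E) (y z : Yt G n) (i0 : ℕ) : Prop :=
  (yc y i0).length < n (i0 + 1) - n i0 ∧
  (∀ i < i0, ¬ (yc y i).length < n (i + 1) - n i) ∧
  (∀ i < i0, (yc z i).edges = [] ∧ (yc z i).src = G.r e) ∧
  (yc z i0).src = (yc y i0).src ∧
  (yc z i0).edges =
    (yc y i0).edges ++ (((List.range i0).map fun i => (yc y i).edges).reverse).flatten
      ++ [e] ∧
  ∀ i, i0 < i → yc z i = yc y i

/-- `OdRel G n e y z` : `z = σ_e(y)`, the graph of the odometer map `σ_e`: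
either there is a least index `i0 = i(y)` and a carry happens there, or all
coordinates of `y` are maximal and `z = (r(e), r(e), …)`. -/
def OdRel (G : DirGraph) (n : ℕ → ℕ) (e : G.E) (y z : Yt G n) : Prop :=
  (∃ i0, Carry G n e y z i0) ∨
  ((∀ i, ¬ (yc y i).length < n (i + 1) - n i) ∧
    ∀ i, (yc z i).edges = [] ∧ (yc z i).src = G.r e)

/-- A subset `B ⊆ Y` is invariant for the odometer maps `σ`. -/
def Invariant (G : DirGraph) (n : ℕ → ℕ) (σ : G.E → Yt G n → Yt G n)
    (B : Set (Yt G n)) : Prop :=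
  (∀ e : G.E, ∀ y ∈ B ∩ De G n e, σ e y ∈ B) ∧
  (∀ y : Yt G n, (∃ f : G.E, ∃ z ∈ De G n f ∩ B, σ f z = y) → y ∈ B)

end DirGraph

namespace S19
open DirGraph

variable {G : DirGraph} {n : ℕ → ℕ}

theorem path_ext {p q : G.Path} (h1 : p.src = q.src) (h2 : p.edges = q.edges) : p = q := by
  cases p; cases q; cases h1; cases h2; rfl

/-- Remainder of the edge list modulo `N` (the final segment of length `l.length % N`). -/
def remE (l : List G.E) (N : ℕ) : List G.E := l.drop (l.length - l.length % N)

/-- The source vertex of the remainder path. -/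
def remS (G : DirGraph) (x : G.V) (l : List G.E) (N : ℕ) : G.V :=
  G.endAt x (l.take (l.length - l.length % N))

theorem remE_eq_self {l : List G.E} {N : ℕ} (h : l.length < N) : remE l N = l := by
  simp [remE, Nat.mod_eq_of_lt h]

theorem remS_eq_self (x : G.V) {l : List G.E} {N : ℕ} (h : l.length < N) :
    remS G x l N = x := by
  simp [remS, Nat.mod_eq_of_lt h]
  rfl

theorem remE_congr {pre l : List G.E} {N : ℕ} (hd : N ∣ pre.length) :
    remE (pre ++ l) N = remE l N := by
  obtain ⟨c, hc⟩ := hd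
  have hm : (pre.length + l.length) % N = l.length % N := by
    rw [hc, Nat.add_comm, Nat.add_mul_mod_self_left]
  have hle : l.length % N ≤ l.length := Nat.mod_le _ _
  have key : pre.length + l.length - (pre.length + l.length) % N
      = pre.length + (l.length - l.length % N) := by omega
  unfold remE
  rw [List.length_append, key, List.drop_length_add_append]

theorem remS_congr (x : G.V) {pre l : List G.E} {N : ℕ} (hd : N ∣ pre.length) :
    remS G x (pre ++ l) N = remS G (G.endAt x pre) l N := by
  obtain ⟨c, hc⟩ := hd
  have hm : (pre.length + l.length) % N = l.length % N := by
    rw [hc, Nat.add_comm, Nat.add_mul_mod_self_left]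
  have hle : l.length % N ≤ l.length := Nat.mod_le _ _
  have key : pre.length + l.length - (pre.length + l.length) % N
      = pre.length + (l.length - l.length % N) := by omega
  unfold remS
  rw [List.length_append, key, List.take_length_add_append, endAt_append]

/-- The concatenation `y_{m-1} ⋯ y_1 y_0` of the low coordinates of `y`. -/
def lowE (y : Yt G n) (m : ℕ) : List G.E :=
  (((List.range m).map fun i => (yc y i).edges).reverse).flatten

theorem lowE_zero (y : Yt G n) : lowE y 0 = [] := by simp [lowE]

theorem lowE_succ (y : Yt G n) (m : ℕ) :
    lowE y (m + 1) = (yc y m).edges ++ lowE y m := by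
  simp [lowE, List.range_succ]

theorem lowE_nil (y : Yt G n) (m : ℕ) (h : ∀ i < m, (yc y i).edges = []) :
    lowE y m = [] := by
  induction m with
  | zero => exact lowE_zero y
  | succ m ih =>
    rw [lowE_succ, h m (Nat.lt_succ_self m), ih (fun i hi => h i (Nat.lt_succ_of_lt hi))]
    rfl

/-- `W_k(y) = y_k ⋯ y_1 y_0` as an edge list. -/
def WkE (y : Yt G n) (k : ℕ) : List G.E := lowE y (k + 1)

theorem WkE_zero (y : Yt G n) : WkE y 0 = (yc y 0).edges := by
  rw [WkE, lowE_succ, lowE_zero, List.append_nil]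

theorem WkE_succ (y : Yt G n) (k : ℕ) :
    WkE y (k + 1) = (yc y (k + 1)).edges ++ WkE y k := lowE_succ y (k + 1)

theorem src_eq_rng (y : Yt G n) (k : ℕ) : (yc y k).src = (yc y (k + 1)).rng := y.prop k

theorem wk_valid (y : Yt G n) (k : ℕ) :
    G.IsPathFrom (yc y k).src (WkE y k) ∧
    G.endAt (yc y k).src (WkE y k) = (yc y 0).rng := by
  induction k with
  | zero => rw [WkE_zero]; exact ⟨(yc y 0).valid, rfl⟩
  | succ k ih =>
    rw [WkE_succ]
    constructor
    · refine isPathFrom_append _ _ _ (yc y (k + 1)).valid ?_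
      have h : G.endAt (yc y (k + 1)).src (yc y (k + 1)).edges = (yc y k).src :=
        (src_eq_rng y k).symm
      rw [h]; exact ih.1
    · rw [endAt_append]
      have h : G.endAt (yc y (k + 1)).src (yc y (k + 1)).edges = (yc y k).src :=
        (src_eq_rng y k).symm
      rw [h]; exact ih.2

theorem npos (h0 : n 0 = 1) (hmono : StrictMono n) (i : ℕ) : 0 < n i :=
  lt_of_lt_of_le (by omega : 0 < n 0) (hmono.monotone (Nat.zero_le i))

theorem coord_lt (y : Yt G n) (i : ℕ) : (yc y i).edges.length < n (i + 1) :=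
  (y.val i).prop.1

theorem coord_dvd (y : Yt G n) (i : ℕ) : n i ∣ (yc y i).edges.length :=
  (y.val i).prop.2

theorem len_le (h0 : n 0 = 1) (hmono : StrictMono n) (hdvd : ∀ i, n i ∣ n (i + 1))
    (y : Yt G n) (i : ℕ) : (yc y i).edges.length + n i ≤ n (i + 1) := by
  obtain ⟨a, ha⟩ := coord_dvd y i
  obtain ⟨b, hb⟩ := hdvd i
  have hpos : 0 < n i := npos h0 hmono i
  have h1 : n i * a < n i * b := by rw [← ha, ← hb]; exact coord_lt y i
  have hab : a < b := lt_of_mul_lt_mul_left h1 (Nat.zero_le _)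
  calc (yc y i).edges.length + n i = n i * (a + 1) := by rw [ha]; ring
    _ ≤ n i * b := Nat.mul_le_mul_left _ hab
    _ = n (i + 1) := hb.symm

theorem wk_len (h0 : n 0 = 1) (hmono : StrictMono n) (hdvd : ∀ i, n i ∣ n (i + 1))
    (y : Yt G n) (k : ℕ) : (WkE y k).length + 1 ≤ n (k + 1) := by
  induction k with
  | zero =>
    rw [WkE_zero]
    have := len_le h0 hmono hdvd y 0
    omega
  | succ k ih =>
    rw [WkE_succ, List.length_append]
    have := len_le h0 hmono hdvd y (k + 1)
    omega

theorem wk_len_max (h0 : n 0 = 1) (hmono : StrictMono n) (hdvd : ∀ i, n i ∣ n (i + 1))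
    (y : Yt G n) (k : ℕ)
    (hmax : ∀ i ≤ k, ¬ (yc y i).length < n (i + 1) - n i) :
    (WkE y k).length + 1 = n (k + 1) := by
  have hcoord : ∀ i ≤ k, (yc y i).edges.length + n i = n (i + 1) := by
    intro i hi
    have h1 := len_le h0 hmono hdvd y i
    have h2 : ¬ (yc y i).edges.length < n (i + 1) - n i := hmax i hi
    omega
  induction k with
  | zero =>
    rw [WkE_zero]
    have := hcoord 0 le_rfl
    omega
  | succ k ih =>
    rw [WkE_succ, List.length_append]
    have h1 := hcoord (k + 1) le_rfl
    have h2 := ih (fun i hi => hmax i (le_trans hi (Nat.le_succ k)))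
      (fun i hi => hcoord i (le_trans hi (Nat.le_succ k)))
    omega

/-- The key step lemma: the effect of one odometer step on `W_k`. -/
theorem step (h0 : n 0 = 1) (hmono : StrictMono n) (hdvd : ∀ i, n i ∣ n (i + 1))
    {e : G.E} {y z : Yt G n} (hz : OdRel G n e y z) (k : ℕ) :
    (WkE z k = WkE y k ++ [e] ∧ (yc z k).src = (yc y k).src) ∨
    (WkE z k = [] ∧ (yc z k).src = G.r e ∧ (WkE y k).length + 1 = n (k + 1)) := by
  rcases hz with ⟨i0, hc1, hc2, hc3, hc4, hc5, hc6⟩ | ⟨hy, hzn⟩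
  · have hc5' : (yc z i0).edges = ((yc y i0).edges ++ lowE y i0) ++ [e] := hc5
    rcases le_or_gt i0 k with hik | hik
    · left
      constructor
      · obtain ⟨j, rfl⟩ := Nat.exists_eq_add_of_le hik
        clear hik
        induction j with
        | zero =>
          show lowE z (i0 + 0 + 1) = lowE y (i0 + 0 + 1) ++ [e]
          rw [Nat.add_zero, lowE_succ, lowE_succ, hc5',
            lowE_nil z i0 (fun i hi => (hc3 i hi).1), List.append_nil,
            List.append_assoc]
        | succ j ihj =>
          have hij : i0 < i0 + j + 1 := by omega
          rw [show i0 + (j + 1) = (i0 + j) + 1 from rfl, WkE_succ, WkE_succ, hc6 _ hij,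
            ihj, ← List.append_assoc]
      · rcases eq_or_lt_of_le hik with rfl | hlt
        · exact hc4
        · rw [hc6 k hlt]
    · right
      refine ⟨lowE_nil z (k + 1) (fun i hi => (hc3 i (lt_of_lt_of_le hi hik)).1),
        (hc3 k hik).2, ?_⟩
      exact wk_len_max h0 hmono hdvd y k (fun i hi => hc2 i (lt_of_le_of_lt hi hik))
  · right
    exact ⟨lowE_nil z (k + 1) (fun i _ => (hzn i).1), (hzn k).2,
      wk_len_max h0 hmono hdvd y k (fun i _ => hy i)⟩

theorem step_rng (h0 : n 0 = 1) (hmono : StrictMono n) (hdvd : ∀ i, n i ∣ n (i + 1))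
    {e : G.E} {y z : Yt G n} (hz : OdRel G n e y z) :
    (yc z 0).rng = G.r e := by
  rcases step h0 hmono hdvd hz 0 with ⟨h1, h2⟩ | ⟨h1, h2, _⟩
  · have he : (yc z 0).edges = (yc y 0).edges ++ [e] := by
      rw [← WkE_zero, h1, WkE_zero]
    show G.endAt (yc z 0).src (yc z 0).edges = G.r e
    rw [he, endAt_append]
    rfl
  · have he : (yc z 0).edges = [] := by rw [← WkE_zero, h1]
    show G.endAt (yc z 0).src (yc z 0).edges = G.r e
    rw [he]
    exact h2

/-- Repeated application of the odometer maps along an edge list. -/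
def applyList (σ : G.E → Yt G n → Yt G n) : List G.E → Yt G n → Yt G n
  | [], y => y
  | e :: es, y => applyList σ es (σ e y)

theorem main (h0 : n 0 = 1) (hmono : StrictMono n) (hdvd : ∀ i, n i ∣ n (i + 1))
    (σ : G.E → Yt G n → Yt G n)
    (hσ : ∀ (e : G.E), ∀ y ∈ De G n e, OdRel G n e y (σ e y))
    (Y₀ : Set (Yt G n)) (hinv : Invariant G n σ Y₀) :
    ∀ (p : List G.E) (y : Yt G n), y ∈ Y₀ → G.IsPathFrom (yc y 0).rng p →
      applyList σ p y ∈ Y₀ ∧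
      (∀ k, WkE (applyList σ p y) k = remE (WkE y k ++ p) (n (k + 1)) ∧
        (yc (applyList σ p y) k).src = remS G (yc y k).src (WkE y k ++ p) (n (k + 1))) := by
  intro p
  induction p with
  | nil =>
    intro y hy _
    refine ⟨hy, fun k => ?_⟩
    have hlt : (WkE y k).length < n (k + 1) := by
      have := wk_len h0 hmono hdvd y k; omega
    rw [List.append_nil]
    exact ⟨(remE_eq_self hlt).symm, (remS_eq_self _ hlt).symm⟩
  | cons e es ih =>
    intro y hy hp
    have hDe : y ∈ De G n e := hp.1.symm
    have hod : OdRel G n e y (σ e y) := hσ e y hDe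
    have hz1Y : σ e y ∈ Y₀ := hinv.1 e y ⟨hy, hDe⟩
    have hrng : (yc (σ e y) 0).rng = G.r e := step_rng h0 hmono hdvd hod
    have hes : G.IsPathFrom (yc (σ e y) 0).rng es := by rw [hrng]; exact hp.2
    obtain ⟨hY, hW⟩ := ih (σ e y) hz1Y hes
    have happ : applyList σ (e :: es) y = applyList σ es (σ e y) := rfl
    refine ⟨by rw [happ]; exact hY, fun k => ?_⟩
    obtain ⟨hWk, hSk⟩ := hW k
    rcases step h0 hmono hdvd hod k with ⟨h1, h2⟩ | ⟨h1, h2, h3⟩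
    · constructor
      · rw [happ, hWk, h1, List.append_assoc]
        rfl
      · rw [happ, hSk, h2, h1, List.append_assoc]
        rfl
    · have hNd : n (k + 1) ∣ (WkE y k ++ [e]).length := by
        rw [List.length_append]
        exact ⟨1, by simp [h3]⟩
      have hassoc : WkE y k ++ e :: es = (WkE y k ++ [e]) ++ es := by
        rw [List.append_assoc]; rfl
      constructor
      · rw [happ, hWk, h1, List.nil_append, hassoc, remE_congr hNd]
      · rw [happ, hSk, h1, h2, List.nil_append, hassoc, remS_congr _ hNd, endAt_append]
        rfl

/-- `W_k` determines the coordinates up to `k`. -/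
theorem decode (h0 : n 0 = 1) (hmono : StrictMono n) (hdvd : ∀ i, n i ∣ n (i + 1)) :
    ∀ (k : ℕ) (y t : Yt G n), WkE y k = WkE t k → (yc y k).src = (yc t k).src →
      ∀ i ≤ k, y.val i = t.val i := by
  intro k
  induction k with
  | zero =>
    intro y t hW hS i hi
    have : i = 0 := Nat.le_zero.1 hi
    subst this
    apply Subtype.ext
    refine path_ext hS ?_
    show (yc y 0).edges = (yc t 0).edges
    rw [← WkE_zero, hW, WkE_zero]
  | succ k ihk =>
    intro y t hW hS i hi
    rw [WkE_succ, WkE_succ] at hW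
    have hWyk := wk_len h0 hmono hdvd y k
    have hWtk := wk_len h0 hmono hdvd t k
    have hlen : (yc y (k + 1)).edges.length = (yc t (k + 1)).edges.length := by
      have hl := congrArg List.length hW
      rw [List.length_append, List.length_append] at hl
      obtain ⟨a, ha⟩ := coord_dvd y (k + 1)
      obtain ⟨b, hb⟩ := coord_dvd t (k + 1)
      rw [ha, hb]
      rw [ha, hb] at hl
      have hab : a = b := by
        rcases Nat.lt_trichotomy a b with h | h | h
        · exfalso
          have : n (k + 1) * (a + 1) ≤ n (k + 1) * b := Nat.mul_le_mul_left _ h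
          rw [Nat.mul_add, Nat.mul_one] at this
          omega
        · exact h
        · exfalso
          have : n (k + 1) * (b + 1) ≤ n (k + 1) * a := Nat.mul_le_mul_left _ h
          rw [Nat.mul_add, Nat.mul_one] at this
          omega
      rw [hab]
    obtain ⟨h1, h2⟩ := List.append_inj hW hlen
    have hsk : (yc y k).src = (yc t k).src := by
      calc (yc y k).src = G.endAt (yc y (k + 1)).src (yc y (k + 1)).edges := src_eq_rng y k
        _ = G.endAt (yc t (k + 1)).src (yc t (k + 1)).edges := by rw [hS, h1]
        _ = (yc t k).src := (src_eq_rng t k).symm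
    rcases Nat.lt_succ_iff_lt_or_eq.1 (Nat.lt_succ_of_le hi) with hik | rfl
    · exact ihk y t h2 hsk i (Nat.lt_succ_iff.1 hik)
    · exact Subtype.ext (path_ext hS h1)

theorem walk (hnosink : ∀ v : G.V, ∃ e : G.E, G.s e = v) :
    ∀ (m : ℕ) (v : G.V), ∃ l : List G.E, G.IsPathFrom v l ∧ l.length = m := by
  intro m
  induction m with
  | zero => exact fun v => ⟨[], trivial, rfl⟩
  | succ m ih =>
    intro v
    obtain ⟨e, he⟩ := hnosink v
    obtain ⟨l, h1, h2⟩ := ih (G.r e)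
    exact ⟨e :: l, ⟨he, h1⟩, by simp [h2]⟩

end S19

open DirGraph in
/-- If for all vertices `v, u` and every `k` there is a
path `w` from `v` to `u` with `n k ∣ |w|`, then the only nonempty closed
invariant subset of `Y` is `Y` itself, i.e. `E(∞)` is minimal. -/
theorem stmt19 (G : DirGraph) [Fintype G.V] [Fintype G.E]
    (hnosource : ∀ v : G.V, ∃ e : G.E, G.r e = v)
    (hnosink : ∀ v : G.V, ∃ e : G.E, G.s e = v)
    (n : ℕ → ℕ) (h0 : n 0 = 1) (hmono : StrictMono n) (hdvd : ∀ i, n i ∣ n (i + 1))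
    (hconn : ∀ v u : G.V, ∀ k : ℕ, ∃ w : G.Path,
      w.src = v ∧ w.rng = u ∧ n k ∣ w.length)
    (σ : G.E → Yt G n → Yt G n)
    (hσ : ∀ (e : G.E), ∀ y ∈ De G n e, OdRel G n e y (σ e y))
    (Y₀ : Set (Yt G n)) (hclosed : IsClosed Y₀) (hinv : Invariant G n σ Y₀)
    (hne : Y₀.Nonempty) :
    Y₀ = Set.univ := by
  obtain ⟨y, hy⟩ := hne
  apply Set.eq_univ_of_forall
  intro t
  have key : ∀ k : ℕ, ∃ z, z ∈ Y₀ ∧ ∀ i ≤ k, z.val i = t.val i := by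
    intro k
    have hWy := S19.wk_len h0 hmono hdvd y k
    have hWt := S19.wk_len h0 hmono hdvd t k
    obtain ⟨q, hq1, hq2⟩ := S19.walk hnosink (n (k + 1) - (S19.WkE y k).length)
      ((yc y 0).rng)
    obtain ⟨w, hw1, hw2, hw3⟩ := hconn (G.endAt (yc y 0).rng q) ((yc t k).src) (k + 1)
    have hw2' : G.endAt (G.endAt (yc y 0).rng q) w.edges = (yc t k).src := by
      rw [← hw1]; exact hw2
    set p := q ++ (w.edges ++ S19.WkE t k) with hp
    have hvalid : G.IsPathFrom (yc y 0).rng p := by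
      refine isPathFrom_append _ _ _ hq1 ?_
      refine isPathFrom_append _ _ _ (by rw [← hw1]; exact w.valid) ?_
      rw [hw2']
      exact (S19.wk_valid t k).1
    obtain ⟨hzY, hWz⟩ := S19.main h0 hmono hdvd σ hσ Y₀ hinv p y hy hvalid
    obtain ⟨hWk, hSk⟩ := hWz k
    have hpre : n (k + 1) ∣ (S19.WkE y k ++ q ++ w.edges).length := by
      rw [List.length_append, List.length_append, hq2]
      obtain ⟨c, hc⟩ := hw3
      have hwl : w.edges.length = n (k + 1) * c := hc
      have hsum : (S19.WkE y k).length + (n (k + 1) - (S19.WkE y k).length)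
          + w.edges.length = n (k + 1) + w.edges.length := by omega
      rw [hsum, hwl]
      exact ⟨1 + c, by ring⟩
    have hassoc : S19.WkE y k ++ p = (S19.WkE y k ++ q ++ w.edges) ++ S19.WkE t k := by
      rw [hp]; simp [List.append_assoc]
    have hWtlt : (S19.WkE t k).length < n (k + 1) := by omega
    have hz1 : S19.WkE (S19.applyList σ p y) k = S19.WkE t k := by
      rw [hWk, hassoc, S19.remE_congr hpre, S19.remE_eq_self hWtlt]
    have hz2 : (yc (S19.applyList σ p y) k).src = (yc t k).src := by
      rw [hSk, hassoc, S19.remS_congr _ hpre, S19.remS_eq_self _ hWtlt,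
        endAt_append, endAt_append, (S19.wk_valid y k).2, hw2']
    exact ⟨S19.applyList σ p y, hzY,
      S19.decode h0 hmono hdvd k (S19.applyList σ p y) t hz1 hz2⟩
  choose zs hzs using key
  have htend : Filter.Tendsto zs Filter.atTop (nhds t) := by
    rw [tendsto_subtype_rng, tendsto_pi_nhds]
    intro i
    rw [nhds_discrete, Filter.tendsto_pure]
    exact Filter.eventually_atTop.2 ⟨i, fun k hk => (hzs k).2 i hk⟩
  exact hclosed.mem_of_tendsto htend (Filter.Eventually.of_forall fun k => (hzs k).1)
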